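/- Let φ be a Drinfeld A-module over a local field K whose coefficients lie in O_K and whose reduction modulo m_K has positive rank. Then for every nonzero a ∈ A, the A-module action of a via φ is surjective on K^alg, on O_{K^alg}, and on m_{K^alg}; i.e. the A-modules (K^alg, φ), (O_{K^alg}, φ) and (m_{K^alg}, φ) are divisible. -/

import Mathlib

/-!
STATEMENT 9: Let `K = k((t)) = LaurentSeries k` be a local field of characteristic `p`
(finite residue field `k`), `L = K^alg` its algebraic closure, and `w` an additive valuation
on `L` (with values in `WithTop ℚ`) extending the normalized valuation
`v = HahnSeries.orderTop` of `K`.  Let `φ` be a Drinfeld `A`-module over `K` with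
coefficients in `O_K` and stable reduction of positive rank: `φ_a = ∑_{i ≤ D a} c_{a,i} τ^i`
with all `c_{a,i} ∈ O_K`, and for `a ≠ 0` some coefficient is a unit of `O_K` (the reduction
`φ̄_a` is nonzero); `φ` is a ring homomorphism into the twisted polynomial ring, expressed by
`φ_1 = id`, `φ_{a+b} = φ_a + φ_b` and `φ_{ab} = φ_a ∘ φ_b` on `L`.
Then for every nonzero `a ∈ A` the action of `a` through `φ` is surjective on `L = K^alg`,
on `O_{K^alg} = {ξ | 0 ≤ w ξ}` and on `m_{K^alg} = {ξ | 0 < w ξ}`; i.e. the `A`-modules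
`(K^alg, φ)`, `(O_{K^alg}, φ)` and `(m_{K^alg}, φ)` are divisible.
-/

noncomputable section

section Helpers

variable {L : Type*} [Field L] (w : AddValuation L (WithTop ℚ))

lemma aux_wprod (s : Multiset L) : w s.prod = (s.map w).sum := by
  induction s using Multiset.induction_on with
  | empty => simp [w.map_one]
  | cons a t ih => simp [w.map_mul, ih]

lemma aux_exists_le_sum (s : Multiset L) (hs : s ≠ 0) : ∃ x ∈ s, w x ≤ w s.sum := by
  induction s using Multiset.induction_on with
  | empty => exact absurd rfl hs
  | cons a t ih =>
    rcases eq_or_ne t 0 with rfl | ht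
    · exact ⟨a, Multiset.mem_cons_self a 0, by simp⟩
    · obtain ⟨x, hx, hxle⟩ := ih ht
      have hmin := w.map_add a t.sum
      rw [Multiset.sum_cons]
      rcases le_total (w a) (w t.sum) with h | h
      · exact ⟨a, Multiset.mem_cons_self a t, by rwa [min_eq_left h] at hmin⟩
      · exact ⟨x, Multiset.mem_cons_of_mem hx,
          le_trans hxle (by rwa [min_eq_right h] at hmin)⟩

lemma aux_exists_max (s : Multiset (WithTop ℚ)) (hs : s ≠ 0) :
    ∃ M ∈ s, ∀ y ∈ s, y ≤ M := by
  induction s using Multiset.induction_on with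
  | empty => exact absurd rfl hs
  | cons a t ih =>
    rcases eq_or_ne t 0 with rfl | ht
    · refine ⟨a, Multiset.mem_cons_self a 0, ?_⟩
      intro y hy
      simp only [Multiset.mem_cons, Multiset.notMem_zero, or_false] at hy
      exact hy.le
    · obtain ⟨M, hM, hMmax⟩ := ih ht
      rcases le_total a M with h | h
      · refine ⟨M, Multiset.mem_cons_of_mem hM, ?_⟩
        intro y hy
        rcases Multiset.mem_cons.1 hy with rfl | hy
        · exact h
        · exact hMmax y hy
      · refine ⟨a, Multiset.mem_cons_self a t, ?_⟩
        intro y hy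
        rcases Multiset.mem_cons.1 hy with rfl | hy
        · exact le_rfl
        · exact le_trans (hMmax y hy) h

lemma aux_sum_le (s : Multiset (WithTop ℚ)) (M : WithTop ℚ) (h : ∀ x ∈ s, x ≤ M) :
    s.sum ≤ Multiset.card s • M := by
  induction s using Multiset.induction_on with
  | empty => simp
  | cons a t ih =>
    rw [Multiset.sum_cons, Multiset.card_cons, add_nsmul, one_nsmul, add_comm (_ • M) M]
    exact add_le_add (h a (Multiset.mem_cons_self a t))
      (ih fun x hx => h x (Multiset.mem_cons_of_mem hx))

lemma aux_nsmul_coe (n : ℕ) (q : ℚ) :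
    n • ((q : WithTop ℚ)) = ((n • q : ℚ) : WithTop ℚ) := by
  induction n with
  | zero => simp
  | succ m ih => rw [succ_nsmul, succ_nsmul, ih, WithTop.coe_add]

/-- Key Newton-polygon style lemma: if all coefficients have nonnegative valuation and the
`n`-th coefficient (for some `n ≥ 1`) has valuation zero, then the polynomial has a root whose
valuation `w r` satisfies `w (coeff 0) ≤ n • w r`. -/
lemma aux_key {L : Type*} [Field L] [IsAlgClosed L] (w : AddValuation L (WithTop ℚ))
    (Q : Polynomial L) (n : ℕ) (hn : 1 ≤ n) (hall : ∀ m, 0 ≤ w (Q.coeff m))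
    (hcn : w (Q.coeff n) = 0) : ∃ r, Q.IsRoot r ∧ w (Q.coeff 0) ≤ n • w r := by
  classical
  have hQcn : Q.coeff n ≠ 0 := by
    intro h
    rw [h, w.map_zero] at hcn
    exact (by simp : (⊤ : WithTop ℚ) ≠ 0) hcn
  have hnd : n ≤ Q.natDegree := Polynomial.le_natDegree_of_ne_zero hQcn
  have hQ0 : Q ≠ 0 := fun h => hQcn (by simp [h])
  have hcard : Multiset.card Q.roots = Q.natDegree :=
    Polynomial.splits_iff_card_roots.1 (IsAlgClosed.splits Q)
  set d := Q.natDegree with hd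
  set R := Q.roots with hR
  -- Vieta at n
  have hv := Polynomial.coeff_eq_esymm_roots_of_card hcard hnd
  have wu : w ((-1 : L) ^ (d - n)) = 0 := by
    rw [w.map_pow, show w (-1 : L) = 0 by rw [w.map_neg, w.map_one], smul_zero]
  have hlce : w Q.leadingCoeff + w (R.esymm (d - n)) = 0 := by
    rw [hv, w.map_mul, w.map_mul, wu, add_zero] at hcn
    exact hcn
  -- choose a subset of small valuation
  have hpsne : (R.powersetCard (d - n)).map Multiset.prod ≠ 0 := by
    rw [Ne, Multiset.map_eq_zero, ← Multiset.card_eq_zero, Multiset.card_powersetCard, hcard]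
    exact (Nat.choose_pos (Nat.sub_le d n)).ne'
  obtain ⟨T, hT, hTle⟩ := aux_exists_le_sum w _ hpsne
  obtain ⟨S, hS, rfl⟩ := Multiset.mem_map.1 hT
  obtain ⟨hSle, hScard⟩ := Multiset.mem_powersetCard.1 hS
  have h1 : w Q.leadingCoeff + (S.map w).sum ≤ 0 := by
    rw [← aux_wprod]
    calc w Q.leadingCoeff + w S.prod ≤ w Q.leadingCoeff + w (R.esymm (d - n)) :=
          add_le_add_right hTle _
      _ = 0 := hlce
  -- valuation of constant coefficient
  have hprod := Polynomial.C_leadingCoeff_mul_prod_multiset_X_sub_C hcard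
  have hcoeff0 : w (Q.coeff 0) = w Q.leadingCoeff + (R.map w).sum := by
    rw [Polynomial.coeff_zero_eq_eval_zero]
    conv_lhs => rw [← hprod]
    rw [Polynomial.eval_mul, Polynomial.eval_C, Polynomial.eval_multiset_prod, Multiset.map_map,
      w.map_mul, aux_wprod, Multiset.map_map]
    congr 1
    refine congrArg Multiset.sum (Multiset.map_congr rfl fun x _ => ?_)
    simp only [Function.comp_apply, Polynomial.eval_sub, Polynomial.eval_X, Polynomial.eval_C,
      zero_sub, w.map_neg]
  have hRS : (R - S) + S = R := tsub_add_cancel_of_le hSle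
  have hsum : (R.map w).sum = ((R - S).map w).sum + (S.map w).sum := by
    conv_lhs => rw [← hRS]
    rw [Multiset.map_add, Multiset.sum_add]
  have hcardRS : Multiset.card (R - S) = n := by
    rw [Multiset.card_sub hSle, hScard, hcard, Nat.sub_sub_self hnd]
  have hne2 : (R - S).map w ≠ 0 := by
    rw [Ne, Multiset.map_eq_zero, ← Multiset.card_eq_zero, hcardRS]
    omega
  obtain ⟨M, hM, hMmax⟩ := aux_exists_max ((R - S).map w) hne2
  obtain ⟨r, hr, rfl⟩ := Multiset.mem_map.1 hM
  have hsumle : ((R - S).map w).sum ≤ n • w r := by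
    have := aux_sum_le ((R - S).map w) (w r) hMmax
    rwa [Multiset.card_map, hcardRS] at this
  refine ⟨r, Polynomial.isRoot_of_mem_roots (Multiset.mem_of_le (Multiset.sub_le_self R S) hr), ?_⟩
  calc w (Q.coeff 0) = (w Q.leadingCoeff + (S.map w).sum) + ((R - S).map w).sum := by
        rw [hcoeff0, hsum, add_comm (((R - S).map w).sum), ← add_assoc]
    _ ≤ 0 + ((R - S).map w).sum := add_le_add_left h1 _
    _ = ((R - S).map w).sum := zero_add _
    _ ≤ n • w r := hsumle

end Helpers

variable (p : ℕ) [Fact p.Prime] (k : Type) [Field k] [Fintype k] [CharP k p]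

/-- Evaluation of the additive (twisted) polynomial `φ_a = ∑_{i=0}^{D a} c_{a,i} τ^i` on the
algebraic closure of `K`. -/
def drinfeldEv (c : ℕ → LaurentSeries k) (D : ℕ)
    (ξ : AlgebraicClosure (LaurentSeries k)) : AlgebraicClosure (LaurentSeries k) :=
  ∑ i ∈ Finset.range (D + 1),
    algebraMap (LaurentSeries k) (AlgebraicClosure (LaurentSeries k)) (c i) * ξ ^ (p ^ i)

theorem drinfeld_stable_reduction_divisible
    (w : AddValuation (AlgebraicClosure (LaurentSeries k)) (WithTop ℚ))
    (hw : ∀ z : LaurentSeries k,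
      w (algebraMap (LaurentSeries k) (AlgebraicClosure (LaurentSeries k)) z) =
        (z.orderTop.map fun a : ℤ => (a : ℚ)))
    (A : Type) [CommRing A] (c : A → ℕ → LaurentSeries k) (D : A → ℕ)
    (hint : ∀ a i, 0 ≤ (c a i).orderTop)
    (hsupp : ∀ a i, D a < i → c a i = 0)
    (hone : ∀ ξ, drinfeldEv p k (c 1) (D 1) ξ = ξ)
    (hadd : ∀ a b ξ, drinfeldEv p k (c (a + b)) (D (a + b)) ξ =
      drinfeldEv p k (c a) (D a) ξ + drinfeldEv p k (c b) (D b) ξ)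
    (hmul : ∀ a b ξ, drinfeldEv p k (c (a * b)) (D (a * b)) ξ =
      drinfeldEv p k (c a) (D a) (drinfeldEv p k (c b) (D b) ξ))
    (hstable : ∀ a : A, a ≠ 0 → ∃ i, (c a i).orderTop = 0) :
    ∀ a : A, a ≠ 0 →
      (∀ ξ, ∃ η, drinfeldEv p k (c a) (D a) η = ξ) ∧
      (∀ ξ, 0 ≤ w ξ → ∃ η, 0 ≤ w η ∧ drinfeldEv p k (c a) (D a) η = ξ) ∧
      (∀ ξ, 0 < w ξ → ∃ η, 0 < w η ∧ drinfeldEv p k (c a) (D a) η = ξ) := by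
  intro a ha
  set F := algebraMap (LaurentSeries k) (AlgebraicClosure (LaurentSeries k)) with hF
  have hp : 0 < p := (Fact.out : p.Prime).pos
  obtain ⟨j, hj⟩ := hstable a ha
  have hpj : 1 ≤ p ^ j := Nat.one_le_pow _ _ hp
  have hcj : c a j ≠ 0 := by
    intro h
    rw [h] at hj
    simp at hj
  have hjD : j ≤ D a := not_lt.1 fun h => hcj (hsupp a j h)
  have hFcj : F (c a j) ≠ 0 := by
    simpa using hcj
  set P : Polynomial (AlgebraicClosure (LaurentSeries k)) :=
    ∑ i ∈ Finset.range (D a + 1), Polynomial.C (F (c a i)) * Polynomial.X ^ (p ^ i) with hP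
  have hQeval : ∀ ξ η : AlgebraicClosure (LaurentSeries k), (P - Polynomial.C ξ).eval η = drinfeldEv p k (c a) (D a) η - ξ := by
    intro ξ η
    simp [hP, drinfeldEv, Polynomial.eval_finset_sum]
    rfl
  have hPcoeff : ∀ m, P.coeff m =
      ∑ i ∈ Finset.range (D a + 1), if m = p ^ i then F (c a i) else 0 := by
    intro m
    rw [hP, Polynomial.finset_sum_coeff]
    refine Finset.sum_congr rfl fun i _ => ?_
    rw [Polynomial.coeff_C_mul, Polynomial.coeff_X_pow, mul_ite, mul_one, mul_zero]
  have hPcoeffj : P.coeff (p ^ j) = F (c a j) := by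
    rw [hPcoeff]
    rw [Finset.sum_eq_single_of_mem j (Finset.mem_range.2 (Nat.lt_succ_of_le hjD))]
    · rw [if_pos rfl]
    · intro i _ hij
      rw [if_neg]
      intro h
      exact hij (Nat.pow_right_injective (Fact.out : p.Prime).two_le h.symm)
  have hcoeffQj : ∀ ξ : AlgebraicClosure (LaurentSeries k), (P - Polynomial.C ξ).coeff (p ^ j) = F (c a j) := by
    intro ξ
    rw [Polynomial.coeff_sub, Polynomial.coeff_C, hPcoeffj,
      if_neg (pow_pos hp j).ne', sub_zero]
  have hcoeffQ0 : ∀ ξ : AlgebraicClosure (LaurentSeries k), (P - Polynomial.C ξ).coeff 0 = -ξ := by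
    intro ξ
    rw [Polynomial.coeff_sub, Polynomial.coeff_C, if_pos rfl, hPcoeff]
    rw [Finset.sum_eq_zero, zero_sub]
    intro i _
    rw [if_neg (pow_pos hp i).ne]
  have hwF : ∀ i, 0 ≤ w (F (c a i)) := by
    intro i
    rw [hw]
    have h0 := hint a i
    cases h : (c a i).orderTop with
    | top => simp
    | coe q =>
      rw [h] at h0
      rw [WithTop.map_coe]
      have hq : (0 : ℤ) ≤ q := by exact_mod_cast h0
      exact_mod_cast (by exact_mod_cast hq : (0 : ℚ) ≤ (q : ℚ))
  have hwcj : w (F (c a j)) = 0 := by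
    rw [hw, hj]
    rfl
  have hall : ∀ ξ : AlgebraicClosure (LaurentSeries k), 0 ≤ w ξ → ∀ m, 0 ≤ w ((P - Polynomial.C ξ).coeff m) := by
    intro ξ hξ m
    rw [Polynomial.coeff_sub]
    refine w.map_le_sub ?_ ?_
    · rw [hPcoeff]
      refine w.map_le_sum fun i _ => ?_
      split
      · exact hwF i
      · rw [w.map_zero]; exact le_top
    · rw [Polynomial.coeff_C]
      split
      · exact hξ
      · rw [w.map_zero]; exact le_top
  have hdr0 : drinfeldEv p k (c a) (D a) 0 = 0 := by
    unfold drinfeldEv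
    refine Finset.sum_eq_zero fun i _ => ?_
    rw [zero_pow (by positivity), mul_zero]
  refine ⟨?_, ?_, ?_⟩
  · intro ξ
    have hdeg : (P - Polynomial.C ξ).degree ≠ 0 := by
      have h1 : p ^ j ≤ (P - Polynomial.C ξ).natDegree :=
        Polynomial.le_natDegree_of_ne_zero (by rw [hcoeffQj]; exact hFcj)
      have h2 : 0 < (P - Polynomial.C ξ).natDegree := lt_of_lt_of_le hpj h1
      exact (Polynomial.natDegree_pos_iff_degree_pos.1 h2).ne'
    obtain ⟨η, hη⟩ := IsAlgClosed.exists_root _ hdeg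
    refine ⟨η, sub_eq_zero.1 ?_⟩
    rw [← hQeval ξ η]
    exact hη
  · intro ξ hξ
    rcases eq_or_ne ξ 0 with rfl | h0
    · exact ⟨0, by rw [w.map_zero]; exact le_top, hdr0⟩
    · obtain ⟨r, hr, hle⟩ := aux_key w (P - Polynomial.C ξ) (p ^ j) hpj (hall ξ hξ)
        (by rw [hcoeffQj]; exact hwcj)
      have heq : drinfeldEv p k (c a) (D a) r = ξ := by
        refine sub_eq_zero.1 ?_
        rw [← hQeval ξ r]
        exact hr
      have hle' : w ξ ≤ (p ^ j) • w r := by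
        rwa [hcoeffQ0, w.map_neg] at hle
      refine ⟨r, ?_, heq⟩
      cases hwr : w r with
      | top => exact le_top
      | coe q =>
        rw [hwr, aux_nsmul_coe] at hle'
        have h2 : (0 : ℚ) ≤ (p ^ j : ℕ) • q := by exact_mod_cast le_trans hξ hle'
        rw [nsmul_eq_mul] at h2
        have hq : (0 : ℚ) ≤ q := by
          by_contra hq
          push_neg at hq
          have hpos : (0 : ℚ) < ((p ^ j : ℕ) : ℚ) := by exact_mod_cast pow_pos hp j
          nlinarith
        exact_mod_cast hq
  · intro ξ hξ
    rcases eq_or_ne ξ 0 with rfl | h0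
    · refine ⟨0, ?_, hdr0⟩
      exact hξ
    · obtain ⟨r, hr, hle⟩ := aux_key w (P - Polynomial.C ξ) (p ^ j) hpj (hall ξ hξ.le)
        (by rw [hcoeffQj]; exact hwcj)
      have heq : drinfeldEv p k (c a) (D a) r = ξ := by
        refine sub_eq_zero.1 ?_
        rw [← hQeval ξ r]
        exact hr
      have hle' : w ξ ≤ (p ^ j) • w r := by
        rwa [hcoeffQ0, w.map_neg] at hle
      refine ⟨r, ?_, heq⟩
      cases hwr : w r with
      | top => exact_mod_cast WithTop.coe_lt_top (0 : ℚ)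
      | coe q =>
        rw [hwr, aux_nsmul_coe] at hle'
        have h2 : (0 : ℚ) < (p ^ j : ℕ) • q := by exact_mod_cast lt_of_lt_of_le hξ hle'
        rw [nsmul_eq_mul] at h2
        have hq : (0 : ℚ) < q := by
          by_contra hq
          push_neg at hq
          have hpos : (0 : ℚ) < ((p ^ j : ℕ) : ℚ) := by exact_mod_cast pow_pos hp j
          nlinarith
        exact_mod_cast hq
end
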